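/- Let D be a complete, cocomplete, extremally co-well-powered, (extremal epi, mono) category. Let {(X_i, Q_i)}_{i∈I} be a class of reduced projectively filtered objects of D and let (X, (f_i)_{i∈I}) be a source for the underlying objects (so f_i : X → X_i in D). Then there is a reduced projective filtration Q' on X (namely the reduction of the smallest projective filtration containing the union of the pull backs f_i*(Q_i)) such that: (1) each f_i lifts to a QD-morphism (X, Q') → (X_i, Q_i); and (2) for every reduced projectively filtered object (Y, Q'') and every morphism h : Y → X of D, h lifts to a QD-morphism (Y, Q'') → (X, Q') if and only if each f_i ∘ h lifts to a QD-morphism (Y, Q'') → (X_i, Q_i). -/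

import Mathlib

open CategoryTheory CategoryTheory.Limits

universe w v u v₂ u₂

namespace FilteredCats

variable {D : Type u} [Category.{v} D]

/-- The class of morphisms of `D` with source `X`. -/
def MorFrom (X : D) : Type (max u v) := Σ Y : D, X ⟶ Y

/-- `Dom δ₁ δ₂` means `δ₁ ≥ δ₂`: there is `h` with `h ∘ δ₁ = δ₂`. -/
def Dom {X : D} (δ₁ δ₂ : MorFrom X) : Prop :=
  ∃ h : δ₁.1 ⟶ δ₂.1, δ₁.2 ≫ h = δ₂.2

/-- A projective filtration on `X`: a nonempty, directed, saturated class of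
morphisms with source `X`. -/
structure ProjFilt (X : D) where
  carrier : Set (MorFrom X)
  nonempty' : carrier.Nonempty
  directed' : ∀ δ₁ ∈ carrier, ∀ δ₂ ∈ carrier, ∃ δ ∈ carrier, Dom δ δ₁ ∧ Dom δ δ₂
  saturated' : ∀ δ₁ ∈ carrier, ∀ δ₂, Dom δ₁ δ₂ → δ₂ ∈ carrier

/-- The pull back of a set of morphisms with source `X` along `f : X' ⟶ X`. -/
def pullSet {X' X : D} (f : X' ⟶ X) (S : Set (MorFrom X)) : Set (MorFrom X') :=
  {δ' | ∃ δ ∈ S, δ' = ⟨δ.1, f ≫ δ.2⟩}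

/-- The pull back of a projective filtration along `f : X' ⟶ X`. -/
def ProjFilt.pull {X' X : D} (f : X' ⟶ X) (P : ProjFilt X) : ProjFilt X' where
  carrier := pullSet f P.carrier
  nonempty' := by
    obtain ⟨δ, hδ⟩ := P.nonempty'
    exact ⟨⟨δ.1, f ≫ δ.2⟩, δ, hδ, rfl⟩
  directed' := by
    rintro _ ⟨δ₁, h₁, rfl⟩ _ ⟨δ₂, h₂, rfl⟩
    obtain ⟨δ, hδ, ⟨g₁, hg₁⟩, ⟨g₂, hg₂⟩⟩ := P.directed' δ₁ h₁ δ₂ h₂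
    exact ⟨⟨δ.1, f ≫ δ.2⟩, ⟨δ, hδ, rfl⟩,
      ⟨g₁, by simp [hg₁]⟩, ⟨g₂, by simp [hg₂]⟩⟩
  saturated' := by
    rintro _ ⟨δ, hδ, rfl⟩ δ₂ ⟨h, hh⟩
    refine ⟨⟨δ₂.1, δ.2 ≫ h⟩, P.saturated' δ hδ _ ⟨h, rfl⟩, ?_⟩
    obtain ⟨Y₂, g₂⟩ := δ₂
    have hg : g₂ = f ≫ (δ.2 ≫ h) := by simpa using hh.symm
    exact Sigma.ext rfl (heq_of_eq hg)

/-- A projectively filtered object of `D`. -/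
structure PObj (D : Type u) [Category.{v} D] where
  base : D
  filt : ProjFilt base

/-- A morphism of projectively filtered objects: a morphism of the underlying
objects such that the pull back of the target filtration is contained in the
source filtration. -/
structure PHom (A B : PObj D) : Type v where
  toHom : A.base ⟶ B.base
  mem : ∀ δ ∈ B.filt.carrier, (⟨δ.1, toHom ≫ δ.2⟩ : MorFrom A.base) ∈ A.filt.carrier

theorem PHom.ext' {A B : PObj D} {f g : PHom A B} (h : f.toHom = g.toHom) : f = g := by
  cases f; cases g; cases h; rfl

instance : Category.{v} (PObj D) where
  Hom := PHom
  id A := ⟨𝟙 A.base, fun δ hδ => by simp only [Category.id_comp]; exact hδ⟩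
  comp {A B C} f g := ⟨f.toHom ≫ g.toHom, fun δ hδ => by
    have h1 := g.mem δ hδ
    have h2 := f.mem _ h1
    simpa using h2⟩
  id_comp f := PHom.ext' (Category.id_comp _)
  comp_id f := PHom.ext' (Category.comp_id _)
  assoc f g h := PHom.ext' (Category.assoc _ _ _)

@[simp] theorem PObj.id_toHom (A : PObj D) : PHom.toHom (𝟙 A) = 𝟙 A.base := rfl
@[simp] theorem PObj.comp_toHom {A B C : PObj D} (f : A ⟶ B) (g : B ⟶ C) :
    PHom.toHom (f ≫ g) = PHom.toHom f ≫ PHom.toHom g := rfl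

/-- The forgetful functor `PD → D`. -/
def Pforget (D : Type u) [Category.{v} D] : PObj D ⥤ D where
  obj A := A.base
  map f := PHom.toHom f

/-- The discrete filtration functor `D → PD`, `X ↦ (X, M(X))`. -/
def Pdiscrete (D : Type u) [Category.{v} D] : D ⥤ PObj D where
  obj X :=
    { base := X
      filt :=
        { carrier := Set.univ
          nonempty' := ⟨⟨X, 𝟙 X⟩, trivial⟩
          directed' := fun δ₁ _ δ₂ _ =>
            ⟨⟨X, 𝟙 X⟩, trivial, ⟨δ₁.2, Category.id_comp _⟩, ⟨δ₂.2, Category.id_comp _⟩⟩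
          saturated' := fun _ _ _ _ => trivial } }
  map f := ⟨f, fun _ _ => trivial⟩

/-- The functor `PD → PE` induced by a functor `G : D → E`. -/
def Pfunctor {E : Type u₂} [Category.{v₂} E] (G : D ⥤ E) : PObj D ⥤ PObj E where
  obj A :=
    { base := G.obj A.base
      filt :=
        { carrier := {δ' | ∃ δ ∈ A.filt.carrier,
            Dom (⟨G.obj δ.1, G.map δ.2⟩ : MorFrom (G.obj A.base)) δ'}
          nonempty' := by
            obtain ⟨δ, hδ⟩ := A.filt.nonempty'
            exact ⟨⟨G.obj δ.1, G.map δ.2⟩, δ, hδ, ⟨𝟙 _, Category.comp_id _⟩⟩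
          directed' := by
            rintro δ'₁ ⟨δ₁, h₁, g₁, hg₁⟩ δ'₂ ⟨δ₂, h₂, g₂, hg₂⟩
            obtain ⟨δ, hδ, ⟨k₁, hk₁⟩, ⟨k₂, hk₂⟩⟩ := A.filt.directed' δ₁ h₁ δ₂ h₂
            refine ⟨⟨G.obj δ.1, G.map δ.2⟩, ⟨δ, hδ, ⟨𝟙 _, Category.comp_id _⟩⟩,
              ⟨G.map k₁ ≫ g₁, ?_⟩, ⟨G.map k₂ ≫ g₂, ?_⟩⟩
            · rw [← Category.assoc, ← G.map_comp, hk₁, hg₁]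
            · rw [← Category.assoc, ← G.map_comp, hk₂, hg₂]
          saturated' := by
            rintro δ'₁ ⟨δ, hδ, g, hg⟩ δ'₂ ⟨h, hh⟩
            exact ⟨δ, hδ, ⟨g ≫ h, by rw [← Category.assoc, hg, hh]⟩⟩ } }
  map {A B} f :=
    ⟨G.map (PHom.toHom f), by
      rintro δ' ⟨δ, hδ, g, hg⟩
      exact ⟨⟨δ.1, PHom.toHom f ≫ δ.2⟩, f.mem δ hδ,
        ⟨g, by rw [← hg, ← Category.assoc, ← G.map_comp]⟩⟩⟩
  map_id A := PHom.ext' (G.map_id _)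
  map_comp f g := PHom.ext' (G.map_comp _ _)

/-- An extremal epimorphism: an epimorphism such that in any factorisation
through a monomorphism, the monomorphism is an isomorphism. -/
def ExtremalEpi {C : Type u₂} [Category.{v₂} C] {X Y : C} (e : X ⟶ Y) : Prop :=
  Epi e ∧ ∀ ⦃Z : C⦄ (g : X ⟶ Z) (m : Z ⟶ Y), Mono m → g ≫ m = e → IsIso m

/-- An (extremal epi, mono) category: every morphism factors as an extremal
epimorphism followed by a monomorphism and such factorisations have the
diagonal fill-in property. -/
structure EMCat (C : Type u₂) [Category.{v₂} C] : Prop where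
  fact : ∀ {X Y : C} (f : X ⟶ Y), ∃ (Z : C) (e : X ⟶ Z) (m : Z ⟶ Y),
    ExtremalEpi e ∧ Mono m ∧ e ≫ m = f
  diag : ∀ {A B Z X : C} (e : A ⟶ B) (m : Z ⟶ X) (g : A ⟶ Z) (h : B ⟶ X),
    ExtremalEpi e → Mono m → g ≫ m = e ≫ h → ∃ d : B ⟶ Z, e ≫ d = g ∧ d ≫ m = h

/-- A projective filtration is reduced if it has an initial subclass of
extremal epimorphisms. -/
def ProjFilt.Reduced {X : D} (P : ProjFilt X) : Prop :=
  ∀ δ ∈ P.carrier, ∃ ε ∈ P.carrier, ExtremalEpi ε.2 ∧ Dom ε δ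

/-- The category of reduced projectively filtered objects of `D`. -/
def QObj (D : Type u) [Category.{v} D] :=
  ObjectProperty.FullSubcategory (fun A : PObj D => A.filt.Reduced)

instance : Category.{v} (QObj D) where
  Hom X Y := X.obj ⟶ Y.obj
  id X := 𝟙 X.obj
  comp f g := f ≫ g

/-- The inclusion functor `QD → PD`. -/
def qpInclusion (D : Type u) [Category.{v} D] : QObj D ⥤ PObj D where
  obj X := X.obj
  map f := f

/-- A category is extremally co-well-powered if every object has, up to
isomorphism, only a (small) set of extremal epimorphisms out of it. -/
def ECWP (C : Type u₂) [Category.{v₂} C] : Prop :=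
  ∀ X : C, ∃ (ι : Type v₂) (Y : ι → C) (e : ∀ i, X ⟶ Y i),
    (∀ i, ExtremalEpi (e i)) ∧
    ∀ ⦃Z : C⦄ (f : X ⟶ Z), ExtremalEpi f → ∃ (i : ι) (φ : Y i ≅ Z), e i ≫ φ.hom = f

/-- The category `(P, D)` associated to a projective filtration: objects are the
elements of `P`, morphisms `δ₁ → δ₂` are morphisms `g` of `D` with `g ∘ δ₁ = δ₂`. -/
def FiltCat {X : D} (P : ProjFilt X) : Type (max u v) := {δ : MorFrom X // δ ∈ P.carrier}

instance {X : D} (P : ProjFilt X) : Category.{v} (FiltCat P) where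
  Hom δ₁ δ₂ := {g : δ₁.1.1 ⟶ δ₂.1.1 // δ₁.1.2 ≫ g = δ₂.1.2}
  id δ := ⟨𝟙 _, Category.comp_id _⟩
  comp f g := ⟨f.1 ≫ g.1, by rw [← Category.assoc, f.2, g.2]⟩
  id_comp f := Subtype.ext (Category.id_comp _)
  comp_id f := Subtype.ext (Category.comp_id _)
  assoc f g h := Subtype.ext (Category.assoc _ _ _)

/-- The functor `(P, D) → D` sending an element of the filtration to its target. -/
def FiltDiagram {X : D} (P : ProjFilt X) : FiltCat P ⥤ D where
  obj δ := δ.1.1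
  map g := g.1

/-- The canonical cone on the diagram of a projective filtration, with apex the
underlying object. -/
def filtCone {X : D} (P : ProjFilt X) : Limits.Cone (FiltDiagram P) where
  pt := X
  π :=
    { app := fun δ => δ.1.2
      naturality := fun δ₁ δ₂ g => by
        have := g.2
        dsimp [FiltDiagram] at *
        simp [this] }

/-- A reduced projective filtration is an iso-filtration if the canonical cone
on its diagram is a limit cone, i.e. the limit exists and the canonical morphism
from the underlying object to it is an isomorphism. -/
def IsoFilt {X : D} (P : ProjFilt X) : Prop :=
  Nonempty (Limits.IsLimit (filtCone P))

/-- The category of iso-filtered objects of `D`. -/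
def KObj (D : Type u) [Category.{v} D] :=
  ObjectProperty.FullSubcategory (fun A : QObj D => IsoFilt A.obj.filt)

instance : Category.{v} (KObj D) where
  Hom X Y := X.obj ⟶ Y.obj
  id X := 𝟙 X.obj
  comp f g := f ≫ g

/-- The inclusion functor `KD → QD`. -/
def kqInclusion (D : Type u) [Category.{v} D] : KObj D ⥤ QObj D where
  obj X := X.obj
  map f := f

/-- The forgetful functor `KD → D`. -/
def Kforget (D : Type u) [Category.{v} D] : KObj D ⥤ D :=
  kqInclusion D ⋙ qpInclusion D ⋙ Pforget D

/-- The smallest projective filtration containing a class of morphisms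
(as a class). -/
def genSet {X : D} (S : Set (MorFrom X)) : Set (MorFrom X) :=
  {δ | ∀ P : ProjFilt X, S ⊆ P.carrier → δ ∈ P.carrier}

/-- The reduction of a class of morphisms: the saturation of the class of
extremal epimorphism parts of (extremal epi, mono)-factorisations of its
elements. -/
def redSet {X : D} (S : Set (MorFrom X)) : Set (MorFrom X) :=
  {δ | ∃ ε : MorFrom X, ExtremalEpi ε.2 ∧
    (∃ δ' ∈ S, ∃ m : ε.1 ⟶ δ'.1, Mono m ∧ ε.2 ≫ m = δ'.2) ∧ Dom ε δ}

/-- The push forward of a filtration class along `f` (single morphism case). -/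
def pushSet {X Y : D} (f : X ⟶ Y) (S : Set (MorFrom X)) : Set (MorFrom Y) :=
  {g | (⟨g.1, f ≫ g.2⟩ : MorFrom X) ∈ S}

/-- The discrete filtration on an object, as an iso-filtered object. -/
def kDiscreteObj (X : D) : KObj D where
  obj :=
    { obj := (Pdiscrete D).obj X
      property := fun δ _ => ⟨⟨X, 𝟙 X⟩, trivial,
        ⟨(inferInstance : Epi (𝟙 X)), fun _ g m hm hgm => by
          haveI : IsSplitEpi m := ⟨⟨⟨g, hgm⟩⟩⟩
          exact isIso_of_mono_of_isSplitEpi m⟩,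
        ⟨δ.2, Category.id_comp _⟩⟩ }
  property := ⟨{
    lift := fun c => c.π.app ⟨⟨X, 𝟙 X⟩, trivial⟩
    fac := fun c j => by
      have h := c.π.naturality (X := ⟨⟨X, 𝟙 X⟩, trivial⟩) (Y := j)
        ⟨j.1.2, Category.id_comp _⟩
      dsimp [FiltDiagram, filtCone] at h ⊢
      first
        | exact ((Category.id_comp (c.π.app j)).symm.trans h).symm
        | simpa [Functor.const_obj_map] using h.symm
    uniq := fun c m hm => by
      have h := hm ⟨⟨X, 𝟙 X⟩, trivial⟩
      rw [← Category.comp_id m]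
      exact h }⟩

/-- The discrete filtration functor `D → KD`. -/
def kDiscrete (D : Type u) [Category.{v} D] : D ⥤ KObj D where
  obj X := kDiscreteObj X
  map f := ⟨f, fun _ _ => trivial⟩
  map_id _ := PHom.ext' rfl
  map_comp _ _ := PHom.ext' rfl

/-- The morphism in `KD` from an iso-filtered object to the discrete object on
the target of an element of its filtration. -/
def kToDiscrete {A : KObj D} (δ : MorFrom A.obj.obj.base)
    (hδ : δ ∈ A.obj.obj.filt.carrier) : A ⟶ kDiscreteObj δ.1 :=
  show PHom A.obj.obj ((kDiscreteObj δ.1).obj.obj) from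
    ⟨δ.2, fun γ _ => A.obj.obj.filt.saturated' δ hδ _ ⟨γ.2, rfl⟩⟩

/-- The natural transformation `P(G) → P(H)` induced by `ν : G → H`. -/
def Pnat {E : Type u₂} [Category.{v₂} E] {G H : D ⥤ E} (ν : G ⟶ H) :
    Pfunctor G ⟶ Pfunctor H where
  app A :=
    ⟨ν.app A.base, by
      rintro δ' ⟨δ, hδ, g, hg⟩
      exact ⟨δ, hδ, ⟨ν.app δ.1 ≫ g, by
        rw [← Category.assoc, ν.naturality, Category.assoc, hg]; rfl⟩⟩⟩
  naturality {A B} f := PHom.ext' (ν.naturality (PHom.toHom f))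


section Aux
open Limits

lemma dom_trans {X : D} {a b c : MorFrom X} (h1 : Dom a b) (h2 : Dom b c) : Dom a c := by
  obtain ⟨g, hg⟩ := h1; obtain ⟨k, hk⟩ := h2
  exact ⟨g ≫ k, by rw [← Category.assoc, hg, hk]⟩

lemma terminal_mem [HasTerminal D] {X : D} (P : ProjFilt X) :
    (⟨⊤_ D, terminal.from X⟩ : MorFrom X) ∈ P.carrier := by
  obtain ⟨δ, hδ⟩ := P.nonempty'
  exact P.saturated' δ hδ _ ⟨terminal.from δ.1, terminal.comp_from _⟩

/-- The smallest projective filtration containing `S`, as a `ProjFilt`. -/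
def genFilt [HasTerminal D] [HasBinaryProducts D] {X : D} (S : Set (MorFrom X)) :
    ProjFilt X where
  carrier := genSet S
  nonempty' := ⟨⟨⊤_ D, terminal.from X⟩, fun P _ => terminal_mem P⟩
  directed' := by
    intro δ₁ h₁ δ₂ h₂
    refine ⟨⟨δ₁.1 ⨯ δ₂.1, prod.lift δ₁.2 δ₂.2⟩, ?_, ⟨prod.fst, by exact prod.lift_fst _ _⟩, ⟨prod.snd, by exact prod.lift_snd _ _⟩⟩
    intro P hP
    obtain ⟨δ, hδ, ⟨k₁, hk₁⟩, ⟨k₂, hk₂⟩⟩ := P.directed' δ₁ (h₁ P hP) δ₂ (h₂ P hP)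
    exact P.saturated' δ hδ _ ⟨prod.lift k₁ k₂, by simp [prod.comp_lift, hk₁, hk₂]⟩
  saturated' := fun δ₁ h₁ δ₂ hd P hP => P.saturated' δ₁ (h₁ P hP) δ₂ hd

lemma subset_genSet {X : D} (S : Set (MorFrom X)) : S ⊆ genSet S :=
  fun _ hδ _ hP => hP hδ

lemma mem_redSet_of_mem {X : D} (hEM : EMCat D) {S : Set (MorFrom X)} {δ : MorFrom X}
    (hδ : δ ∈ S) : δ ∈ redSet S := by
  obtain ⟨Z, e, m, he, hm, hem⟩ := hEM.fact δ.2
  exact ⟨⟨Z, e⟩, he, ⟨δ, hδ, m, hm, hem⟩, ⟨m, hem⟩⟩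

/-- The reduction of a projective filtration, as a `ProjFilt`. -/
def redFilt (hEM : EMCat D) {X : D} (P : ProjFilt X) : ProjFilt X where
  carrier := redSet P.carrier
  nonempty' := by
    obtain ⟨δ, hδ⟩ := P.nonempty'
    exact ⟨δ, mem_redSet_of_mem hEM hδ⟩
  directed' := by
    rintro δ₁ ⟨ε₁, he₁, ⟨δ'₁, hδ'₁, m₁, hm₁, hem₁⟩, hd₁⟩
      δ₂ ⟨ε₂, he₂, ⟨δ'₂, hδ'₂, m₂, hm₂, hem₂⟩, hd₂⟩
    obtain ⟨δ', hδ', hd'₁, hd'₂⟩ := P.directed' δ'₁ hδ'₁ δ'₂ hδ'₂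
    obtain ⟨Z, e, m, he, hm, hem⟩ := hEM.fact δ'.2
    have key : ∀ (ε δ'' : MorFrom X), (∃ m' : ε.1 ⟶ δ''.1, Mono m' ∧ ε.2 ≫ m' = δ''.2) →
        Dom δ' δ'' → Dom (⟨Z, e⟩ : MorFrom X) ε := by
      rintro ε δ'' ⟨m', hm', hem'⟩ ⟨k, hk⟩
      obtain ⟨d, hd1, -⟩ := hEM.diag e m' ε.2 (m ≫ k) he hm'
        (by rw [hem', ← hk, ← hem, Category.assoc])
      exact ⟨d, hd1⟩
    exact ⟨⟨Z, e⟩, ⟨⟨Z, e⟩, he, ⟨δ', hδ', m, hm, hem⟩, ⟨𝟙 _, Category.comp_id _⟩⟩,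
      dom_trans (key ε₁ δ'₁ ⟨m₁, hm₁, hem₁⟩ hd'₁) hd₁,
      dom_trans (key ε₂ δ'₂ ⟨m₂, hm₂, hem₂⟩ hd'₂) hd₂⟩
  saturated' := by
    rintro δ₁ ⟨ε, he, hf, hd⟩ δ₂ hd₂
    exact ⟨ε, he, hf, dom_trans hd hd₂⟩

/-- The push forward of a filtration along `h`, as a `ProjFilt`. -/
def pushFilt [HasTerminal D] [HasBinaryProducts D] {Y X : D} (h : Y ⟶ X) (Q : ProjFilt Y) :
    ProjFilt X where
  carrier := pushSet h Q.carrier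
  nonempty' := ⟨⟨⊤_ D, terminal.from X⟩, by
    show (⟨⊤_ D, h ≫ terminal.from X⟩ : MorFrom Y) ∈ Q.carrier
    rw [terminal.comp_from]
    exact terminal_mem Q⟩
  directed' := by
    intro g₁ h₁ g₂ h₂
    refine ⟨⟨g₁.1 ⨯ g₂.1, prod.lift g₁.2 g₂.2⟩, ?_, ⟨prod.fst, by exact prod.lift_fst _ _⟩, ⟨prod.snd, by exact prod.lift_snd _ _⟩⟩
    obtain ⟨δ, hδ, ⟨k₁, hk₁⟩, ⟨k₂, hk₂⟩⟩ := Q.directed' _ h₁ _ h₂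
    refine Q.saturated' δ hδ _ ⟨prod.lift k₁ k₂, ?_⟩
    show δ.2 ≫ prod.lift k₁ k₂ = h ≫ prod.lift g₁.2 g₂.2
    simp only [prod.comp_lift]
    exact congrArg₂ prod.lift hk₁ hk₂
  saturated' := by
    rintro g₁ hg₁ g₂ ⟨k, hk⟩
    exact Q.saturated' _ hg₁ _ ⟨k, by
      show (h ≫ g₁.2) ≫ k = h ≫ g₂.2
      rw [Category.assoc, hk]⟩

end Aux

/-- reduced pull back filtrations along a source.  There is a
reduced projective filtration `Q'` on `X` (the reduction of the smallest
projective filtration containing the union of the pull backs `fᵢ*(Qᵢ)`) such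
that each `fᵢ` lifts to a `QD`-morphism `(X,Q') → (Xᵢ,Qᵢ)`, and a morphism
`h : Y → X` from a reduced filtered object lifts to a `QD`-morphism
`(Y,Q'') → (X,Q')` iff each `fᵢ ∘ h` lifts. -/
theorem reduced_pull_back_filtration [Limits.HasLimits D] [Limits.HasColimits D]
    (hecwp : ECWP D) (hEM : EMCat D)
    {ι : Type w} (A : ι → PObj D) (hA : ∀ i, (A i).filt.Reduced)
    (X : D) (f : ∀ i, X ⟶ (A i).base) :
    ∃ Q' : ProjFilt X,
      Q'.carrier = redSet (genSet (⋃ i, pullSet (f i) (A i).filt.carrier)) ∧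
      Q'.Reduced ∧
      (∀ i, ∀ δ ∈ (A i).filt.carrier,
        (⟨δ.1, f i ≫ δ.2⟩ : MorFrom X) ∈ Q'.carrier) ∧
      (∀ (Y : D) (Q'' : ProjFilt Y), Q''.Reduced → ∀ h : Y ⟶ X,
        ((∀ δ ∈ Q'.carrier, (⟨δ.1, h ≫ δ.2⟩ : MorFrom Y) ∈ Q''.carrier) ↔
          (∀ i, ∀ δ ∈ (A i).filt.carrier,
            (⟨δ.1, (h ≫ f i) ≫ δ.2⟩ : MorFrom Y) ∈ Q''.carrier))) := by
  classical
  set S := ⋃ i, pullSet (f i) (A i).filt.carrier with hS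
  have hgen : ∀ i, ∀ δ ∈ (A i).filt.carrier,
      (⟨δ.1, f i ≫ δ.2⟩ : MorFrom X) ∈ genSet S :=
    fun i δ hδ => subset_genSet S (Set.mem_iUnion.2 ⟨i, δ, hδ, rfl⟩)
  refine ⟨redFilt hEM (genFilt S), rfl, ?_, ?_, ?_⟩
  · rintro δ ⟨ε, he, hf, hd⟩
    exact ⟨ε, ⟨ε, he, hf, ⟨𝟙 _, Category.comp_id _⟩⟩, he, hd⟩
  · intro i δ hδ
    exact mem_redSet_of_mem hEM (hgen i δ hδ)
  · intro Y Q'' hQ'' h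
    constructor
    · intro hall i δ hδ
      have := hall _ (mem_redSet_of_mem hEM (hgen i δ hδ))
      simpa [Category.assoc] using this
    · intro hall
      have hsub : genSet S ⊆ (pushFilt h Q'').carrier := by
        intro δ hδ
        apply hδ (pushFilt h Q'')
        rintro δ' hδ'
        obtain ⟨i, γ, hγ, rfl⟩ := Set.mem_iUnion.1 hδ'
        show (⟨γ.1, h ≫ (f i ≫ γ.2)⟩ : MorFrom Y) ∈ Q''.carrier
        rw [← Category.assoc]
        exact hall i γ hγ
      rintro δ ⟨ε, he, ⟨δ', hδ', m, hm, hem⟩, k, hk⟩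
      have h1 : (⟨δ'.1, h ≫ δ'.2⟩ : MorFrom Y) ∈ Q''.carrier := hsub hδ'
      obtain ⟨ε'', hmem, hext, kk, hkk⟩ := hQ'' _ h1
      obtain ⟨d, hd1, -⟩ := hEM.diag ε''.2 m (h ≫ ε.2) kk hext hm
        (by rw [Category.assoc, hem]; exact hkk.symm)
      have h2 : (⟨ε.1, h ≫ ε.2⟩ : MorFrom Y) ∈ Q''.carrier :=
        Q''.saturated' ε'' hmem _ ⟨d, hd1⟩
      exact Q''.saturated' _ h2 _ ⟨k, by
        show (h ≫ ε.2) ≫ k = h ≫ δ.2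
        rw [Category.assoc, hk]⟩


end FilteredCats
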